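/- arXiv:2105.10061 — 3 statements merged into one kernel-verified Lean document; each statement's English description precedes it below -/
import Mathlib

section
/- Suppose real vectors satisfy ||Q(t+1) − Q*||² ≤ ||Q(t) − Q*||² + B − 2(Z(Q*) − Z(Q(t))), and the local polyhedron property Z(Q*) − Z(Q) ≥ L·||Q* − Q|| holds for all Q with ||Q − Q*|| > D, where D ≥ max{B/L − L/4, L/2}. Then whenever ||Q(t) − Q*|| > D, we have ||Q(t+1) − Q*|| ≤ ||Q(t) − Q*|| − L/2. -/
/-- Lemma 1 (per-iteration contraction): under the drift inequality and the local
polyhedron property, if `‖Q t − Q*‖ > D` then `‖Q (t+1) − Q*‖ ≤ ‖Q t − Q*‖ − L/2`. -/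
theorem stmt3 {n : ℕ} (Q0 Q1 Qs : EuclideanSpace ℝ (Fin n))
    (Z : EuclideanSpace ℝ (Fin n) → ℝ) (B L D : ℝ)
    (hB : 0 < B) (hL : 0 < L)
    (hD : D ≥ max (B / L - L / 4) (L / 2))
    (hdrift : ‖Q1 - Qs‖ ^ 2 ≤ ‖Q0 - Qs‖ ^ 2 + B - 2 * (Z Qs - Z Q0))
    (hpoly : ∀ Q : EuclideanSpace ℝ (Fin n), ‖Q - Qs‖ > D → Z Qs - Z Q ≥ L * ‖Qs - Q‖)
    (hout : ‖Q0 - Qs‖ > D) :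
    ‖Q1 - Qs‖ ≤ ‖Q0 - Qs‖ - L / 2 := by
  have hp := hpoly Q0 hout
  rw [norm_sub_rev Qs Q0] at hp
  have h1 : D ≥ B / L - L / 4 := le_trans (le_max_left _ _) hD
  have h2 : D ≥ L / 2 := le_trans (le_max_right _ _) hD
  have hr : B / L - L / 4 < ‖Q0 - Qs‖ := lt_of_le_of_lt h1 hout
  have hBL : B - L ^ 2 / 4 ≤ L * ‖Q0 - Qs‖ := by
    have := (div_lt_iff₀ hL).mp (by linarith : B / L < ‖Q0 - Qs‖ + L / 4)
    nlinarith
  have hsq : ‖Q1 - Qs‖ ^ 2 ≤ (‖Q0 - Qs‖ - L / 2) ^ 2 := by nlinarith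
  have hnn : 0 ≤ ‖Q0 - Qs‖ - L / 2 := by linarith
  nlinarith [norm_nonneg (Q1 - Qs), sq_nonneg (‖Q1 - Qs‖ - (‖Q0 - Qs‖ - L / 2))]
end

section
/- Let (Q(t)) be a sequence of vectors such that for all t: if ||Q(t) − Q*|| > D then ||Q(t+1) − Q*|| ≤ ||Q(t) − Q*|| − L/2, and in all cases ||Q(t+1) − Q(t)|| ≤ √B. If for some τ we have ||Q(τ) − Q*|| ≤ D + √B, then ||Q(t) − Q*|| ≤ D + √B for all t ≥ τ. -/
/-- Lemma 2: once the queue vector enters the ball of radius `D + √B` around `Q*`,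
it never leaves it. -/
theorem stmt6 {n : ℕ} (Q : ℕ → EuclideanSpace ℝ (Fin n)) (Qs : EuclideanSpace ℝ (Fin n))
    (D L B : ℝ) (hD : 0 < D) (hB : 0 < B) (hL : 0 ≤ L)
    (hcontract : ∀ t : ℕ, ‖Q t - Qs‖ > D → ‖Q (t + 1) - Qs‖ ≤ ‖Q t - Qs‖ - L / 2)
    (hstep : ∀ t : ℕ, ‖Q (t + 1) - Q t‖ ≤ Real.sqrt B)
    (τ : ℕ) (hτ : ‖Q τ - Qs‖ ≤ D + Real.sqrt B) :
    ∀ t : ℕ, τ ≤ t → ‖Q t - Qs‖ ≤ D + Real.sqrt B := by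
  intro t ht
  induction t with
  | zero => simpa [Nat.le_zero.mp ht] using hτ
  | succ k ih =>
    rcases Nat.lt_or_ge τ (k + 1) with h | h
    · have hk := ih (Nat.lt_succ_iff.mp h)
      by_cases hd : ‖Q k - Qs‖ > D
      · have := hcontract k hd
        linarith [hL]
      · push_neg at hd
        have : ‖Q (k + 1) - Qs‖ ≤ ‖Q (k + 1) - Q k‖ + ‖Q k - Qs‖ := by
          calc ‖Q (k + 1) - Qs‖ = ‖(Q (k + 1) - Q k) + (Q k - Qs)‖ := by abel_nf
            _ ≤ _ := norm_add_le _ _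
        linarith [hstep k]
    · have : τ = k + 1 := le_antisymm ht h
      simpa [this] using hτ
end

section
/- Let (Q(t)) be a sequence of nonnegative vectors with Q(0) = 0 satisfying: ||Q(t+1)||² − ||Q(t)||² ≤ B + 2V h_max − 2κ||Q(t)|| whenever ||Q(t)|| ≥ (B/2 + V h_max)/κ, and ||Q(t+1)|| ≤ ||Q(t)|| + √B always. Then for all t: ||Q(t)|| ≤ (B/2 + V h_max)/κ + √B. -/
/-- Lemma 3 (uniform queue-length bound): a nonnegative queue process started at `0`
whose squared norm drifts downward above the threshold `(B/2 + V h_max)/κ` and whose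
norm increases by at most `√B` per step stays below `(B/2 + V h_max)/κ + √B`. -/
theorem stmt7 {n : ℕ} (Q : ℕ → EuclideanSpace ℝ (Fin n))
    (B V hmax κ : ℝ) (hB : 0 < B) (hV : 0 < V) (hh : 0 < hmax) (hκ : 0 < κ)
    (hnonneg : ∀ t i, 0 ≤ Q t i) (h0 : Q 0 = 0)
    (hdrift : ∀ t : ℕ, (B / 2 + V * hmax) / κ ≤ ‖Q t‖ →
      ‖Q (t + 1)‖ ^ 2 - ‖Q t‖ ^ 2 ≤ B + 2 * V * hmax - 2 * κ * ‖Q t‖)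
    (hstep : ∀ t : ℕ, ‖Q (t + 1)‖ ≤ ‖Q t‖ + Real.sqrt B) :
    ∀ t : ℕ, ‖Q t‖ ≤ (B / 2 + V * hmax) / κ + Real.sqrt B := by
  have hsqrt : 0 ≤ Real.sqrt B := Real.sqrt_nonneg B
  have hthr : 0 ≤ (B / 2 + V * hmax) / κ := by positivity
  intro t
  induction t with
  | zero => simp [h0]; positivity
  | succ t ih =>
    by_cases hc : ‖Q t‖ ≤ (B / 2 + V * hmax) / κ
    · calc ‖Q (t + 1)‖ ≤ ‖Q t‖ + Real.sqrt B := hstep t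
        _ ≤ (B / 2 + V * hmax) / κ + Real.sqrt B := by linarith
    · push_neg at hc
      have hd := hdrift t hc.le
      have h2 : 2 * κ * ‖Q t‖ ≥ B + 2 * V * hmax := by
        have := (div_le_iff₀ hκ).mp hc.le
        nlinarith
      have hsq : ‖Q (t + 1)‖ ^ 2 ≤ ‖Q t‖ ^ 2 := by linarith
      have : ‖Q (t + 1)‖ ≤ ‖Q t‖ := by
        nlinarith [norm_nonneg (Q (t + 1)), norm_nonneg (Q t)]
      linarith
end
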